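/- (Carleson packing condition for stopping families.) Let ω be a Radon measure on ℝ and let 𝒮 be a collection of dyadic intervals. For S ∈ 𝒮 let ch_𝒮(S) denote the set of maximal elements of {S' ∈ 𝒮 : S' ⊊ S}. Assume that for every S ∈ 𝒮: Σ_{S'∈ch_𝒮(S)} ω(S') ≤ (1/2)·ω(S). Then for every Q ∈ 𝒟: Σ_{S∈𝒮, S⊆Q} ω(S) ≤ 2·ω(Q). -/

import Mathlib

open MeasureTheory Set Filter
open scoped Classical

noncomputable section

/-- The dyadic interval `[2^k m, 2^k (m+1))`. -/
def dy (k m : ℤ) : Set ℝ := Set.Ico ((2:ℝ)^k * m) ((2:ℝ)^k * (m+1))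

/-- The left half of the dyadic interval. -/
def dyL (k m : ℤ) : Set ℝ := dy (k-1) (2*m)

/-- The right half of the dyadic interval. -/
def dyR (k m : ℤ) : Set ℝ := dy (k-1) (2*m+1)

/-- `I^{(r)}`: the dyadic interval of length `2^r |I|` containing `I = dy k m`. -/
def dyUp (r : ℕ) (k m : ℤ) : Set ℝ := dy (k + r) (Int.fdiv m (2^r))

/-- The pairing `⟨f, g⟩_μ = ∫ f g dμ`. -/
def ip (μ : Measure ℝ) (f g : ℝ → ℝ) : ℝ := ∫ x, f x * g x ∂μ

/-- The `L²(μ)` norm. -/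
def nrm (μ : Measure ℝ) (f : ℝ → ℝ) : ℝ := Real.sqrt (∫ x, f x ^ 2 ∂μ)

/-- The average `⟨f⟩_s^μ = μ(s)⁻¹ ∫_s f dμ`. -/
def avg (μ : Measure ℝ) (s : Set ℝ) (f : ℝ → ℝ) : ℝ := (μ s).toReal⁻¹ * ∫ x in s, f x ∂μ

/-- The weight-adapted Haar function `h_I^σ` for `I = dy k m`. -/
def haarW (σ : Measure ℝ) (k m : ℤ) : ℝ → ℝ :=
  if σ (dyL k m) ≠ 0 ∧ σ (dyR k m) ≠ 0 then
    fun x =>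
      Real.sqrt ((σ (dyL k m)).toReal / ((σ (dy k m)).toReal * (σ (dyR k m)).toReal))
          * (dyR k m).indicator 1 x
        - Real.sqrt ((σ (dyR k m)).toReal / ((σ (dy k m)).toReal * (σ (dyL k m)).toReal))
          * (dyL k m).indicator 1 x
  else 0

/-- The martingale difference `Δ_I^σ f = ⟨f, h_I^σ⟩_σ · h_I^σ`. -/
def mdiff (σ : Measure ℝ) (k m : ℤ) (f : ℝ → ℝ) : ℝ → ℝ :=
  fun x => ip σ f (haarW σ k m) * haarW σ k m x

/-- `𝒮`: the linear span of the indicators of dyadic intervals. -/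
def simpleSpan : Submodule ℝ (ℝ → ℝ) :=
  Submodule.span ℝ {f : ℝ → ℝ | ∃ k m : ℤ, f = (dy k m).indicator 1}

/-- A formal operator pair `(T, T*)`: linear maps with `T` sending `𝒮_σ` into `L²(ω)`,
`T*` sending `𝒮_ω` into `L²(σ)`, satisfying the duality relation
`⟨T(σf), g⟩_ω = ⟨f, T*(ωg)⟩_σ` on the spans of indicators.  We write `P.T f` for `T(σf)`
and `P.Ts g` for `T*(ωg)`. -/
structure FormalPair (σ ω : Measure ℝ) where
  T : (ℝ → ℝ) →ₗ[ℝ] (ℝ → ℝ)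
  Ts : (ℝ → ℝ) →ₗ[ℝ] (ℝ → ℝ)
  memT : ∀ f ∈ simpleSpan, MemLp (T f) 2 ω
  memTs : ∀ g ∈ simpleSpan, MemLp (Ts g) 2 σ
  adj : ∀ f ∈ simpleSpan, ∀ g ∈ simpleSpan, ∫ x, T f x * g x ∂ω = ∫ x, f x * Ts g x ∂σ

/-- `(T, T*)` is essentially well localized with parameter `r`. -/
def EWL {σ ω : Measure ℝ} (P : FormalPair σ ω) (r : ℕ) : Prop :=
  ∀ k m : ℤ,
    (∀ᵐ x ∂ω, x ∉ dyUp r k m → P.T (haarW σ k m) x = 0) ∧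
    (∀ᵐ x ∂σ, x ∉ dyUp r k m → P.Ts (haarW ω k m) x = 0)

open scoped ENNReal

lemma two_zpow_pos (k : ℤ) : (0:ℝ) < 2 ^ k := zpow_pos two_pos k

lemma dy_lt (k m : ℤ) : (2:ℝ)^k * m < 2^k * (m+1) := by
  have := two_zpow_pos k; nlinarith

lemma dy_nonempty (k m : ℤ) : (dy k m).Nonempty := Set.nonempty_Ico.mpr (dy_lt k m)

lemma dy_subset_iff {k m k' m' : ℤ} :
    dy k m ⊆ dy k' m' ↔ (2:ℝ)^k' * m' ≤ 2^k * m ∧ (2:ℝ)^k * (m+1) ≤ 2^k' * (m'+1) :=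
  Set.Ico_subset_Ico_iff (dy_lt k m)

lemma level_le_of_subset {k m k' m' : ℤ} (h : dy k m ⊆ dy k' m') : k ≤ k' := by
  obtain ⟨h1, h2⟩ := dy_subset_iff.mp h
  have e1 : (2:ℝ)^k * (m+1) = 2^k * m + 2^k := by ring
  have e2 : (2:ℝ)^k' * (m'+1) = 2^k' * m' + 2^k' := by ring
  have : (2:ℝ)^k ≤ 2^k' := by linarith
  exact (zpow_le_zpow_iff_right₀ one_lt_two).mp this

lemma eq_of_subset_same {k m m' : ℤ} (h : dy k m ⊆ dy k m') : m = m' := by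
  obtain ⟨h1, h2⟩ := dy_subset_iff.mp h
  have hp := two_zpow_pos k
  have a1 : (m':ℝ) ≤ m := le_of_mul_le_mul_left h1 hp
  have a2 : (m:ℝ) + 1 ≤ m' + 1 := le_of_mul_le_mul_left h2 hp
  exact_mod_cast le_antisymm (by linarith) a1

lemma dy_eq_of_eq {k m k' m' : ℤ} (h : dy k m = dy k' m') : k = k' ∧ m = m' := by
  have hk : k = k' := le_antisymm (level_le_of_subset h.le) (level_le_of_subset h.ge)
  subst hk
  exact ⟨rfl, eq_of_subset_same h.le⟩

lemma dy_inj : Function.Injective (fun p : ℤ × ℤ => dy p.1 p.2) := by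
  intro p q h
  obtain ⟨h1, h2⟩ := dy_eq_of_eq h
  exact Prod.ext h1 h2

lemma level_lt_of_ssubset {k m k' m' : ℤ} (h : dy k m ⊂ dy k' m') : k < k' := by
  rcases lt_or_eq_of_le (level_le_of_subset h.subset) with h' | h'
  · exact h'
  · subst h'
    exact absurd (congrArg (dy k) (eq_of_subset_same h.subset)) h.ne

lemma dy_subset_up_one (K a : ℤ) : dy K (2*a) ⊆ dy (K+1) a ∧ dy K (2*a+1) ⊆ dy (K+1) a := by
  have hp := two_zpow_pos K
  have e : (2:ℝ)^(K+1) = 2^K * 2 := zpow_add_one₀ two_ne_zero K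
  constructor <;> (rw [dy_subset_iff, e]; push_cast; constructor <;> nlinarith)

lemma exists_up (k m : ℤ) (r : ℕ) : ∃ m', dy k m ⊆ dy (k + r) m' := by
  induction r with
  | zero => exact ⟨m, by norm_num⟩
  | succ n ih =>
    obtain ⟨m', hm'⟩ := ih
    rcases Int.even_or_odd m' with ⟨a, ha⟩ | ⟨a, ha⟩
    · refine ⟨a, hm'.trans ?_⟩
      have := (dy_subset_up_one (k + n) a).1
      rw [show 2*a = m' by omega, show (k:ℤ) + n + 1 = k + (n+1 : ℕ) by push_cast; ring] at this
      exact this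
    · refine ⟨a, hm'.trans ?_⟩
      have := (dy_subset_up_one (k + n) a).2
      rw [show 2*a+1 = m' by omega, show (k:ℤ) + n + 1 = k + (n+1 : ℕ) by push_cast; ring] at this
      exact this

lemma same_level_of_mem {x : ℝ} {k m m' : ℤ} (hx : x ∈ dy k m) (hx' : x ∈ dy k m') : m = m' := by
  obtain ⟨a1, a2⟩ := hx
  obtain ⟨b1, b2⟩ := hx'
  have hp := two_zpow_pos k
  have c1 : (m:ℝ) < m' + 1 := by
    have := lt_of_le_of_lt a1 b2
    exact lt_of_mul_lt_mul_left this hp.le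
  have c2 : (m':ℝ) < m + 1 := by
    have := lt_of_le_of_lt b1 a2
    exact lt_of_mul_lt_mul_left this hp.le
  have : m < m' + 1 := by exact_mod_cast c1
  have : m' < m + 1 := by exact_mod_cast c2
  omega

lemma subset_of_inter {k k' m m' : ℤ} (hk : k ≤ k') (h : (dy k m ∩ dy k' m').Nonempty) :
    dy k m ⊆ dy k' m' := by
  obtain ⟨m'', hm''⟩ := exists_up k m (k' - k).toNat
  rw [show k + ((k' - k).toNat : ℤ) = k' by omega] at hm''
  obtain ⟨x, hx1, hx2⟩ := h
  rwa [same_level_of_mem (hm'' hx1) hx2] at hm''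

lemma dy_nested {k k' m m' : ℤ} (h : (dy k m ∩ dy k' m').Nonempty) :
    dy k m ⊆ dy k' m' ∨ dy k' m' ⊆ dy k m := by
  rcases le_total k k' with hk | hk
  · exact Or.inl (subset_of_inter hk h)
  · exact Or.inr (subset_of_inter hk (by rwa [Set.inter_comm] at h))

/-- nested version for pairs both containing a common dyadic interval -/
lemma dy_nested' {k k' m m' a b : ℤ} (h1 : dy a b ⊆ dy k m) (h2 : dy a b ⊆ dy k' m') :
    dy k m ⊆ dy k' m' ∨ dy k' m' ⊆ dy k m := by
  obtain ⟨x, hx⟩ := dy_nonempty a b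
  exact dy_nested ⟨x, h1 hx, h2 hx⟩

def anc (S : Set (ℤ × ℤ)) (k m : ℤ) (q : ℤ × ℤ) : Set (ℤ × ℤ) :=
  {p | p ∈ S ∧ dy q.1 q.2 ⊂ dy p.1 p.2 ∧ dy p.1 p.2 ⊆ dy k m}

lemma anc_finite (S : Set (ℤ × ℤ)) (k m : ℤ) (q : ℤ × ℤ) : (anc S k m q).Finite := by
  apply Set.Finite.of_finite_image (f := Prod.fst)
  · apply (Set.finite_Ioc q.1 k).subset
    rintro _ ⟨p, ⟨_, hss, hsub⟩, rfl⟩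
    exact ⟨level_lt_of_ssubset hss, level_le_of_subset hsub⟩
  · rintro p ⟨_, hp, _⟩ p' ⟨_, hp', _⟩ he
    obtain ⟨x, hx⟩ := dy_nonempty q.1 q.2
    have hx1 := hp.subset hx
    have hx2 := hp'.subset hx
    rw [he] at hx1
    have := same_level_of_mem hx1 hx2
    exact Prod.ext he this

noncomputable def dep (S : Set (ℤ × ℤ)) (k m : ℤ) (q : ℤ × ℤ) : ℕ := (anc S k m q).ncard

def IsChild (S : Set (ℤ × ℤ)) (p q : ℤ × ℤ) : Prop :=
  q ∈ S ∧ dy q.1 q.2 ⊂ dy p.1 p.2 ∧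
    ∀ q' ∈ S, dy q'.1 q'.2 ⊂ dy p.1 p.2 → dy q.1 q.2 ⊆ dy q'.1 q'.2 →
      dy q.1 q.2 = dy q'.1 q'.2

lemma anc_child {S : Set (ℤ × ℤ)} {k m : ℤ} {p q : ℤ × ℤ} (hp : p ∈ S)
    (hpQ : dy p.1 p.2 ⊆ dy k m) (h : IsChild S p q) :
    anc S k m q = insert p (anc S k m p) := by
  obtain ⟨hqS, hqp, hmax⟩ := h
  ext p'
  constructor
  · rintro ⟨h1, h2, h3⟩
    rcases dy_nested' hqp.subset h2.subset with hc | hc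
    · rcases lt_or_eq_of_le (α := Set ℝ) hc with hlt | heq
      · exact Or.inr ⟨h1, hlt, h3⟩
      · exact Or.inl (dy_inj heq.symm)
    · rcases lt_or_eq_of_le (α := Set ℝ) hc with hlt | heq
      · exact absurd (hmax p' h1 hlt h2.subset) h2.ne
      · exact Or.inl (dy_inj heq)
  · rintro (rfl | ⟨h1, h2, h3⟩)
    · exact ⟨hp, hqp, hpQ⟩
    · exact ⟨h1, hqp.trans h2, h3⟩

lemma dep_child {S : Set (ℤ × ℤ)} {k m : ℤ} {p q : ℤ × ℤ} (hp : p ∈ S)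
    (hpQ : dy p.1 p.2 ⊆ dy k m) (h : IsChild S p q) :
    dep S k m q = dep S k m p + 1 := by
  have hnot : p ∉ anc S k m p := fun ⟨_, hss, _⟩ => (ssubset_irrefl _) hss
  rw [dep, anc_child hp hpQ h, Set.ncard_insert_of_notMem hnot (anc_finite S k m p), dep]

lemma parent_exists' {S : Set (ℤ × ℤ)} {k m : ℤ} {q : ℤ × ℤ} (hq : q ∈ S)
    (hne : (anc S k m q).Nonempty) :
    ∃ p, p ∈ S ∧ dy p.1 p.2 ⊆ dy k m ∧ IsChild S p q := by
  obtain ⟨p, hpmem, hmin⟩ := Set.exists_min_image (anc S k m q) (·.1) (anc_finite S k m q) hne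
  obtain ⟨hpS, hqp, hpQ⟩ := hpmem
  refine ⟨p, hpS, hpQ, hq, hqp, ?_⟩
  intro q' hq'S hq'p hqq'
  by_contra hne2
  have hss : dy q.1 q.2 ⊂ dy q'.1 q'.2 := ssubset_of_subset_of_ne hqq' hne2
  have hmem : q' ∈ anc S k m q := ⟨hq'S, hss, hq'p.subset.trans hpQ⟩
  have := hmin q' hmem
  have := level_lt_of_ssubset hq'p
  omega

lemma child_unique {S : Set (ℤ × ℤ)} {p p' q : ℤ × ℤ} (hp : p ∈ S) (hp' : p' ∈ S)
    (h1 : IsChild S p q) (h2 : IsChild S p' q) : p = p' := by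
  rcases dy_nested' h1.2.1.subset h2.2.1.subset with hc | hc
  · rcases lt_or_eq_of_le (α := Set ℝ) hc with hlt | heq
    · exact absurd (h2.2.2 p hp hlt h1.2.1.subset) h1.2.1.ne
    · exact dy_inj heq
  · rcases lt_or_eq_of_le (α := Set ℝ) hc with hlt | heq
    · exact absurd (h1.2.2 p' hp' hlt h2.2.1.subset) h2.2.1.ne
    · exact dy_inj heq.symm

lemma anc_empty_of_dep0 {S : Set (ℤ × ℤ)} {k m : ℤ} {q : ℤ × ℤ}
    (h : dep S k m q = 0) : anc S k m q = ∅ :=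
  (Set.ncard_eq_zero (anc_finite S k m q)).mp h

lemma disjoint_of_dep0 {S : Set (ℤ × ℤ)} {k m : ℤ} {q q' : ℤ × ℤ}
    (hq : q ∈ S ∧ dy q.1 q.2 ⊆ dy k m ∧ dep S k m q = 0)
    (hq' : q' ∈ S ∧ dy q'.1 q'.2 ⊆ dy k m ∧ dep S k m q' = 0)
    (hne : q ≠ q') : Disjoint (dy q.1 q.2) (dy q'.1 q'.2) := by
  rw [Set.disjoint_iff_inter_eq_empty]
  by_contra hni
  have hnon : (dy q.1 q.2 ∩ dy q'.1 q'.2).Nonempty := Set.nonempty_iff_ne_empty.mpr hni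
  rcases dy_nested hnon with hc | hc
  · rcases lt_or_eq_of_le (α := Set ℝ) hc with hlt | heq
    · have : q' ∈ anc S k m q := ⟨hq'.1, hlt, hq'.2.1⟩
      rw [anc_empty_of_dep0 hq.2.2] at this
      exact this
    · exact hne (dy_inj heq)
  · rcases lt_or_eq_of_le (α := Set ℝ) hc with hlt | heq
    · have : q ∈ anc S k m q' := ⟨hq.1, hlt, hq.2.1⟩
      rw [anc_empty_of_dep0 hq'.2.2] at this
      exact this
    · exact hne (dy_inj heq.symm)



/-- Carleson packing condition for stopping families: if each stopping interval's
maximal proper stopping descendants carry at most half its measure, then the family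
satisfies the Carleson packing condition with constant `2`. -/
theorem carleson_packing (ω : Measure ℝ) [IsLocallyFiniteMeasure ω] (S : Set (ℤ × ℤ))
    (hch : ∀ p ∈ S,
      ∑' q : {q : ℤ × ℤ // q ∈ S ∧ dy q.1 q.2 ⊂ dy p.1 p.2 ∧
          ∀ q' ∈ S, dy q'.1 q'.2 ⊂ dy p.1 p.2 → dy q.1 q.2 ⊆ dy q'.1 q'.2 →
            dy q.1 q.2 = dy q'.1 q'.2},
        ω (dy (q : ℤ × ℤ).1 (q : ℤ × ℤ).2) ≤ ω (dy p.1 p.2) / 2) :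
    ∀ k m : ℤ,
      ∑' q : {q : ℤ × ℤ // q ∈ S ∧ dy q.1 q.2 ⊆ dy k m},
        ω (dy (q : ℤ × ℤ).1 (q : ℤ × ℤ).2) ≤ 2 * ω (dy k m) := by
  intro k m
  set g : ℕ → ℤ × ℤ → ℝ≥0∞ := fun n q =>
    if q ∈ S ∧ dy q.1 q.2 ⊆ dy k m ∧ dep S k m q = n then ω (dy q.1 q.2) else 0 with hg
  -- Step A: rewrite LHS as a sum over all of ℤ × ℤ
  have stepA : (∑' q : {q : ℤ × ℤ // q ∈ S ∧ dy q.1 q.2 ⊆ dy k m},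
        ω (dy (q : ℤ × ℤ).1 (q : ℤ × ℤ).2))
      = ∑' q : ℤ × ℤ, if q ∈ S ∧ dy q.1 q.2 ⊆ dy k m then ω (dy q.1 q.2) else 0 := by
    refine Eq.trans (tsum_subtype {q : ℤ × ℤ | q ∈ S ∧ dy q.1 q.2 ⊆ dy k m}
      (fun q => ω (dy q.1 q.2))) ?_
    exact tsum_congr fun q => Set.indicator_apply _ _ _
  -- Step B: expand into generations
  have stepB : (∑' q : ℤ × ℤ, if q ∈ S ∧ dy q.1 q.2 ⊆ dy k m then ω (dy q.1 q.2) else 0)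
      = ∑' (n : ℕ) (q : ℤ × ℤ), g n q := by
    rw [ENNReal.tsum_comm]
    refine tsum_congr fun q => ?_
    by_cases hq : q ∈ S ∧ dy q.1 q.2 ⊆ dy k m
    · have h1 : ∀ n, n ≠ dep S k m q → g n q = 0 := by
        intro n hn
        simp only [hg]
        exact if_neg (by rintro ⟨-, -, h3⟩; exact hn h3.symm)
      rw [if_pos hq, tsum_eq_single (dep S k m q) h1]
      simp [hg, hq.1, hq.2]
    · rw [if_neg hq]
      refine (ENNReal.tsum_eq_zero.mpr fun n => ?_).symm
      simp only [hg]
      exact if_neg (by rintro ⟨h1, h2, -⟩; exact hq ⟨h1, h2⟩)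
  -- Generation 0
  have hB0 : (∑' q : ℤ × ℤ, g 0 q) ≤ ω (dy k m) := by
    set t : ℤ × ℤ → Set ℝ := fun q =>
      if q ∈ S ∧ dy q.1 q.2 ⊆ dy k m ∧ dep S k m q = 0 then dy q.1 q.2 else ∅ with ht
    have hval : ∀ q, g 0 q = ω (t q) := by
      intro q
      simp only [hg, ht]
      by_cases hc : q ∈ S ∧ dy q.1 q.2 ⊆ dy k m ∧ dep S k m q = 0
      · simp only [if_pos hc]
      · simp only [if_neg hc, measure_empty]
    have hmeas : ∀ q, MeasurableSet (t q) := by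
      intro q
      simp only [ht]
      by_cases hc : q ∈ S ∧ dy q.1 q.2 ⊆ dy k m ∧ dep S k m q = 0
      · simp only [if_pos hc]; exact measurableSet_Ico
      · simp only [if_neg hc]; exact MeasurableSet.empty
    have hdisj : Pairwise (Function.onFun Disjoint t) := by
      intro q q' hne
      rw [Function.onFun, ht]
      by_cases hc : q ∈ S ∧ dy q.1 q.2 ⊆ dy k m ∧ dep S k m q = 0
      · by_cases hc' : q' ∈ S ∧ dy q'.1 q'.2 ⊆ dy k m ∧ dep S k m q' = 0
        · simp only [if_pos hc, if_pos hc']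
          exact disjoint_of_dep0 hc hc' hne
        · simp only [if_neg hc']; exact disjoint_empty _
      · simp only [if_neg hc]; exact empty_disjoint _
    calc (∑' q : ℤ × ℤ, g 0 q) = ∑' q : ℤ × ℤ, ω (t q) := tsum_congr hval
      _ = ω (⋃ q, t q) := (measure_iUnion hdisj hmeas).symm
      _ ≤ ω (dy k m) := by
            apply measure_mono
            apply Set.iUnion_subset
            intro q
            simp only [ht]
            by_cases hc : q ∈ S ∧ dy q.1 q.2 ⊆ dy k m ∧ dep S k m q = 0
            · simp only [if_pos hc]; exact hc.2.1
            · simp only [if_neg hc]; exact Set.empty_subset _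
  -- Generation step
  have hStep : ∀ n : ℕ, (∑' q : ℤ × ℤ, g (n+1) q) ≤ (∑' q : ℤ × ℤ, g n q) / 2 := by
    intro n
    set h : ℤ × ℤ → ℤ × ℤ → ℝ≥0∞ := fun p q =>
      if p ∈ S ∧ dy p.1 p.2 ⊆ dy k m ∧ dep S k m p = n ∧ IsChild S p q
        then ω (dy q.1 q.2) else 0 with hh
    have key : ∀ q, g (n+1) q = ∑' p : ℤ × ℤ, h p q := by
      intro q
      by_cases hq : q ∈ S ∧ dy q.1 q.2 ⊆ dy k m ∧ dep S k m q = n + 1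
      · have hancne : (anc S k m q).Nonempty := by
          rw [Set.nonempty_iff_ne_empty]
          intro hemp
          have : dep S k m q = 0 := by rw [dep, hemp, Set.ncard_empty]
          omega
        obtain ⟨p₀, hp₀S, hp₀Q, hp₀child⟩ := parent_exists' hq.1 hancne
        have hdep₀ : dep S k m p₀ = n := by
          have := dep_child hp₀S hp₀Q hp₀child
          omega
        have hsingle : ∀ p, p ≠ p₀ → h p q = 0 := by
          intro p hne
          simp only [hh]
          refine if_neg ?_
          rintro ⟨h1, h2, h3, h4⟩
          exact hne (child_unique h1 hp₀S h4 hp₀child)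
        rw [tsum_eq_single p₀ hsingle]
        simp only [hg, hh]
        rw [if_pos hq, if_pos ⟨hp₀S, hp₀Q, hdep₀, hp₀child⟩]
      · refine Eq.trans ?_ (ENNReal.tsum_eq_zero.mpr fun p => ?_).symm
        · simp only [hg]; exact if_neg hq
        · simp only [hh]
          refine if_neg ?_
          rintro ⟨h1, h2, h3, h4⟩
          refine hq ⟨h4.1, h4.2.1.subset.trans h2, ?_⟩
          rw [dep_child h1 h2 h4, h3]
    have inner : ∀ p, (∑' q : ℤ × ℤ, h p q) ≤ g n p / 2 := by
      intro p
      by_cases hp : p ∈ S ∧ dy p.1 p.2 ⊆ dy k m ∧ dep S k m p = n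
      · have heq : (∑' q : ℤ × ℤ, h p q)
            = ∑' q : ℤ × ℤ, Set.indicator {q : ℤ × ℤ | IsChild S p q}
                (fun q => ω (dy q.1 q.2)) q := by
          refine tsum_congr fun q => ?_
          simp only [hh, Set.indicator_apply, Set.mem_setOf_eq]
          by_cases hcq : IsChild S p q
          · rw [if_pos ⟨hp.1, hp.2.1, hp.2.2, hcq⟩, if_pos hcq]
          · rw [if_neg (by rintro ⟨-, -, -, h4⟩; exact hcq h4), if_neg hcq]
        rw [heq, ← tsum_subtype {q : ℤ × ℤ | IsChild S p q} (fun q => ω (dy q.1 q.2))]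
        calc _ ≤ ω (dy p.1 p.2) / 2 := hch p hp.1
          _ = g n p / 2 := by simp only [hg]; rw [if_pos hp]
      · refine le_trans (le_of_eq (ENNReal.tsum_eq_zero.mpr fun q => ?_)) zero_le
        simp only [hh]
        exact if_neg (by rintro ⟨h1, h2, h3, -⟩; exact hp ⟨h1, h2, h3⟩)
    calc (∑' q : ℤ × ℤ, g (n+1) q) = ∑' (q : ℤ × ℤ) (p : ℤ × ℤ), h p q := tsum_congr key
      _ = ∑' (p : ℤ × ℤ) (q : ℤ × ℤ), h p q := ENNReal.tsum_comm
      _ ≤ ∑' p : ℤ × ℤ, g n p / 2 := ENNReal.tsum_le_tsum inner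
      _ = (∑' q : ℤ × ℤ, g n q) / 2 := by
          simp only [div_eq_mul_inv, ENNReal.tsum_mul_right]
  -- geometric bound
  have hGeom : ∀ n : ℕ, (∑' q : ℤ × ℤ, g n q) ≤ 2⁻¹ ^ n * ω (dy k m) := by
    intro n
    induction n with
    | zero => simpa using hB0
    | succ n ih =>
      refine (hStep n).trans ?_
      calc (∑' q : ℤ × ℤ, g n q) / 2 ≤ (2⁻¹ ^ n * ω (dy k m)) / 2 := by
            exact ENNReal.div_le_div_right ih 2
        _ = 2⁻¹ ^ (n+1) * ω (dy k m) := by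
            rw [div_eq_mul_inv, pow_succ]
            ring
  rw [stepA, stepB]
  calc (∑' (n : ℕ) (q : ℤ × ℤ), g n q) ≤ ∑' n : ℕ, 2⁻¹ ^ n * ω (dy k m) :=
        ENNReal.tsum_le_tsum hGeom
    _ = (∑' n : ℕ, (2⁻¹ : ℝ≥0∞) ^ n) * ω (dy k m) := ENNReal.tsum_mul_right
    _ = 2 * ω (dy k m) := by
        rw [ENNReal.tsum_geometric, ENNReal.one_sub_inv_two, inv_inv]


end
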